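/- Let A ∈ 𝐔_m and let α, β ⊆ {1,…,m} be saturated index sets for A (i.e., ∑_{i,j∈α} a_{ij} = |α| and similarly for β). Then α ∪ β is a saturated index set for A, and if α ∩ β ≠ ∅, then α ∩ β is also a saturated index set for A. -/

import Mathlib

open Matrix Finset

def IsInU {m : ℕ} (A : Matrix (Fin m) (Fin m) ℝ) : Prop :=
  A.IsSymm ∧ (∀ i j, 0 ≤ A i j) ∧
    ∀ α : Finset (Fin m), ∑ i ∈ α, ∑ j ∈ α, A i j ≤ (α.card : ℝ)

def IsInUtop {m : ℕ} (A : Matrix (Fin m) (Fin m) ℝ) : Prop :=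
  IsInU A ∧ ∑ i, ∑ j, A i j = (m : ℝ)

def IsExtremeIn {m : ℕ} (S : Matrix (Fin m) (Fin m) ℝ → Prop)
    (A : Matrix (Fin m) (Fin m) ℝ) : Prop :=
  S A ∧ ∀ A₁ A₂, S A₁ → S A₂ → A₁ + A₂ = (2 : ℝ) • A → A₁ = A ∧ A₂ = A

def IsRowStochastic {m : ℕ} (X : Matrix (Fin m) (Fin m) ℝ) : Prop :=
  (∀ i j, 0 ≤ X i j) ∧ ∀ i, ∑ j, X i j = 1

def IsSubstochastic {m : ℕ} (X : Matrix (Fin m) (Fin m) ℝ) : Prop :=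
  (∀ i j, 0 ≤ X i j) ∧ ∀ i, ∑ j, X i j ≤ 1

theorem stmt_5 {m : ℕ} (A : Matrix (Fin m) (Fin m) ℝ) (hA : IsInU A)
    (α β : Finset (Fin m))
    (hα : ∑ i ∈ α, ∑ j ∈ α, A i j = (α.card : ℝ))
    (hβ : ∑ i ∈ β, ∑ j ∈ β, A i j = (β.card : ℝ)) :
    (∑ i ∈ α ∪ β, ∑ j ∈ α ∪ β, A i j = ((α ∪ β).card : ℝ)) ∧
      ((α ∩ β).Nonempty →
        ∑ i ∈ α ∩ β, ∑ j ∈ α ∩ β, A i j = ((α ∩ β).card : ℝ)) := by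
  obtain ⟨-, hpos, hle⟩ := hA
  have key : ∀ S : Finset (Fin m),
      ∑ i ∈ S, ∑ j ∈ S, A i j = ∑ p ∈ S ×ˢ S, A p.1 p.2 := by
    intro S; rw [Finset.sum_product]
  have hsub : (α ×ˢ α) ∪ (β ×ˢ β) ⊆ (α ∪ β) ×ˢ (α ∪ β) := by
    intro p hp
    simp only [Finset.mem_union, Finset.mem_product] at *
    tauto
  have hint : (α ×ˢ α) ∩ (β ×ˢ β) = (α ∩ β) ×ˢ (α ∩ β) := by
    ext p
    simp only [Finset.mem_inter, Finset.mem_product]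
    tauto
  have hsupadd : (α.card : ℝ) + β.card ≤
      (∑ i ∈ α ∪ β, ∑ j ∈ α ∪ β, A i j) + ∑ i ∈ α ∩ β, ∑ j ∈ α ∩ β, A i j := by
    rw [← hα, ← hβ, key, key, key, key, ← Finset.sum_union_inter, hint]
    exact add_le_add
      (Finset.sum_le_sum_of_subset_of_nonneg hsub fun p _ _ => hpos p.1 p.2) le_rfl
  have hcards : ((α ∪ β).card : ℝ) + (α ∩ β).card = α.card + β.card := by
    have := Finset.card_union_add_card_inter α β
    exact_mod_cast congrArg (Nat.cast : ℕ → ℝ) this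
  have h1 := hle (α ∪ β)
  have h2 := hle (α ∩ β)
  constructor
  · linarith
  · intro _; linarith
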